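/- There is no inner product ⟨·,·⟩ on 𝔤_λ for which every adjoint operator ad_X is skew-symmetric, i.e. no real inner product on 𝔤_λ satisfying ⟨[X,Y],Z⟩ = −⟨Y,[X,Z]⟩ for all X, Y, Z ∈ 𝔤_λ. (Indeed, any such inner product would force ⟨E₄,E₄⟩ = 0 because [E₁,E₄] = 2E₄; this is the paper's argument that the group G_λ is not compact.) -/

import Mathlib

/-- There is no inner product on `𝔤_λ` (i.e. no symmetric positive
definite bilinear form) for which every adjoint operator `ad_X` is skew-symmetric:
indeed, any such inner product would force `⟨E₄,E₄⟩ = 0` because `[E₁,E₄] = 2E₄`. -/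
theorem g_lambda_no_biinvariant_inner_product (lam : ℝ)
    (L : Type*) [LieRing L] [LieAlgebra ℝ L]
    (E : Module.Basis (Fin 4) ℝ L)
    (h12 : ⁅E 0, E 1⁆ = E 1 - lam • E 2)
    (h13 : ⁅E 0, E 2⁆ = lam • E 1 + E 2)
    (h14 : ⁅E 0, E 3⁆ = (2 : ℝ) • E 3)
    (h23 : ⁅E 1, E 2⁆ = -E 3)
    (h24 : ⁅E 1, E 3⁆ = 0)
    (h34 : ⁅E 2, E 3⁆ = 0) :
    ¬ ∃ g : L →ₗ[ℝ] L →ₗ[ℝ] ℝ,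
        (∀ X Y : L, g X Y = g Y X) ∧
        (∀ X : L, X ≠ 0 → 0 < g X X) ∧
        (∀ X Y Z : L, g ⁅X, Y⁆ Z = -g Y ⁅X, Z⁆) := by
  rintro ⟨g, hsymm, hpos, hskew⟩
  have h := hskew (E 0) (E 3) (E 3)
  simp only [h14, map_smul, LinearMap.smul_apply, smul_eq_mul] at h
  have hzero : g (E 3) (E 3) = 0 := by linarith
  have hne : (E 3 : L) ≠ 0 := E.ne_zero 3
  have := hpos (E 3) hne
  rw [hzero] at this
  exact lt_irrefl 0 this
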